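/- Let X = ℕ^ℤ, T the left shift (Tx)_k = x_{k+1}, and P = ∏_{k∈ℤ} P_k a half-stationary product measure: P_k = p for all k ≤ 0, where p and all P_k (k ≥ 1) are probability measures on ℕ with p(j) > 0 and P_k(j) > 0 for all j ∈ ℕ, k ≥ 1. Then the shift T is nonsingular with respect to P if and only if ∑_{k=1}^∞ ∑_{j∈ℕ} ( √(P_k(j)) − √(P_{k−1}(j)) )² < ∞ (with P_0 = p). -/

import Mathlib

open MeasureTheory Filter Topology
open scoped ENNReal
open scoped symmDiff

noncomputable section

namespace CountableAlphabet

/-- The two-sided shift by `n` on `X = ℕ^ℤ`: `(shift n x) k = x (k + n)`. -/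
def shift (n : ℤ) (x : ℤ → ℕ) : ℤ → ℕ := fun k => x (k + n)

/-- `P` is the product probability measure `∏_{k ∈ ℤ} P_k` on `ℕ^ℤ` with marginals `p`,
where `p k j` is the probability that coordinate `k` equals `j`. -/
def IsProductMeasure (P : Measure (ℤ → ℕ)) (p : ℤ → ℕ → ℝ) : Prop :=
  IsProbabilityMeasure P ∧
  (∀ k j, 0 ≤ p k j) ∧ (∀ k, HasSum (p k) 1) ∧
  ∀ (s : Finset ℤ) (y : ℤ → ℕ),
    P {x | ∀ i ∈ s, x i = y i} = ∏ i ∈ s, ENNReal.ofReal (p i (y i))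



/-- restriction to coordinates in `s` -/
def res (s : Finset ℤ) (x : ℤ → ℕ) : {i // i ∈ s} → ℕ := fun i => x i

/-- cylinder: agrees with `y` on `s` -/
def cylE (s : Finset ℤ) (y : ℤ → ℕ) : Set (ℤ → ℕ) := {x | ∀ i ∈ s, x i = y i}

/-- extension of a partial function by 0 -/
def extz (s : Finset ℤ) (z : {i // i ∈ s} → ℕ) : ℤ → ℕ :=
  fun i => if h : i ∈ s then z ⟨i, h⟩ else 0

lemma extz_mem (s : Finset ℤ) (z : {i // i ∈ s} → ℕ) {i : ℤ} (h : i ∈ s) :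
    extz s z i = z ⟨i, h⟩ := dif_pos h

lemma measurable_res (s : Finset ℤ) : Measurable (res s) :=
  measurable_pi_lambda _ fun i => measurable_pi_apply _

lemma measurableSet_cylE (s : Finset ℤ) (y : ℤ → ℕ) : MeasurableSet (cylE s y) := by
  have : cylE s y = ⋂ (i : ℤ) (_ : i ∈ s), (fun x : ℤ → ℕ => x i) ⁻¹' {y i} := by
    ext x; simp [cylE]
  rw [this]
  exact MeasurableSet.biInter s.countable_toSet
    (fun i _ => (measurable_pi_apply i) (measurableSet_singleton _))

lemma mem_cylE_iff_res (s : Finset ℤ) (z : {i // i ∈ s} → ℕ) (x : ℤ → ℕ) :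
    x ∈ cylE s (extz s z) ↔ res s x = z := by
  constructor
  · intro h; funext i; exact (h i i.2).trans (extz_mem s z i.2)
  · intro h i hi
    rw [extz_mem s z hi]
    exact congrFun h ⟨i, hi⟩

lemma res_preimage (s : Finset ℤ) (S : Set ({i // i ∈ s} → ℕ)) :
    res s ⁻¹' S = ⋃ z : S, cylE s (extz s (z : {i // i ∈ s} → ℕ)) := by
  ext x
  simp only [Set.mem_preimage, Set.mem_iUnion]
  constructor
  · intro h; exact ⟨⟨res s x, h⟩, (mem_cylE_iff_res _ _ _).2 rfl⟩
  · rintro ⟨z, hz⟩; rw [mem_cylE_iff_res] at hz; rw [hz]; exact z.2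

lemma disjoint_cylE (s : Finset ℤ) :
    Pairwise (Function.onFun Disjoint fun z : {i // i ∈ s} → ℕ => cylE s (extz s z)) := by
  intro z w hzw
  refine Set.disjoint_left.2 fun x hx hx' => hzw ?_
  rw [mem_cylE_iff_res] at hx hx'
  rw [← hx, ← hx']

/-- intersection of compatible cylinders -/
lemma cylE_inter_of_compat {s t : Finset ℤ} {y w : ℤ → ℕ}
    (h : ∀ i ∈ s, i ∈ t → y i = w i) :
    cylE s y ∩ cylE t w = cylE (s ∪ t) (s.piecewise y w) := by
  ext x
  simp only [cylE, Set.mem_inter_iff, Set.mem_setOf_eq, Finset.mem_union]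
  constructor
  · rintro ⟨h1, h2⟩ i hi
    rcases Finset.mem_union.1 (Finset.mem_union.2 hi) with hs | ht
    · rw [Finset.piecewise_eq_of_mem _ _ _ hs]; exact h1 i hs
    · by_cases hs : i ∈ s
      · rw [Finset.piecewise_eq_of_mem _ _ _ hs]; exact h1 i hs
      · rw [Finset.piecewise_eq_of_notMem _ _ _ hs]; exact h2 i ht
  · intro hx
    constructor
    · intro i hi
      have := hx i (Or.inl hi)
      rwa [Finset.piecewise_eq_of_mem _ _ _ hi] at this
    · intro i hi
      have := hx i (Or.inr hi)
      by_cases hs : i ∈ s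
      · rw [Finset.piecewise_eq_of_mem _ _ _ hs] at this; rw [this, ← h i hs hi]
      · rwa [Finset.piecewise_eq_of_notMem _ _ _ hs] at this

lemma cylE_inter_of_not_compat {s t : Finset ℤ} {y w : ℤ → ℕ} {i : ℤ}
    (hs : i ∈ s) (ht : i ∈ t) (h : y i ≠ w i) :
    cylE s y ∩ cylE t w = ∅ := by
  ext x
  simp only [cylE, Set.mem_inter_iff, Set.mem_setOf_eq, Set.mem_empty_iff_false, iff_false,
    not_and]
  intro h1 h2
  exact h ((h1 i hs).symm.trans (h2 i ht))


def consEquiv (a : ℤ) (s : Finset ℤ) (ha : a ∉ s) :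
    ({i // i ∈ insert a s} → ℕ) ≃ ℕ × ({i // i ∈ s} → ℕ) where
  toFun z := (z ⟨a, Finset.mem_insert_self a s⟩, fun i => z ⟨i, Finset.mem_insert_of_mem i.2⟩)
  invFun p := fun i => if h : (i : ℤ) ∈ s then p.2 ⟨i, h⟩ else p.1
  left_inv z := by
    funext i
    by_cases h : (i : ℤ) ∈ s
    · simp only [dif_pos h]
    · simp only [dif_neg h]
      have : (i : ℤ) = a := by
        rcases Finset.mem_insert.1 i.2 with h' | h'
        · exact h'
        · exact absurd h' h
      congr 1
      exact Subtype.ext this.symm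
  right_inv p := by
    refine Prod.ext ?_ ?_
    · simp only [dif_neg ha]
    · funext i
      simp only [dif_pos i.2]

lemma hasSum_prod_marginals (g : ℤ → ℕ → ℝ) (h0 : ∀ i j, 0 ≤ g i j)
    (hs : ∀ i, Summable (g i)) (s : Finset ℤ) :
    HasSum (fun z : {i // i ∈ s} → ℕ => ∏ i ∈ s, g i (extz s z i))
      (∏ i ∈ s, ∑' j, g i j) := by
  classical
  induction s using Finset.induction_on with
  | empty =>
      simp only [Finset.prod_empty]
      have h1 : HasSum (fun _ : {i // i ∈ (∅ : Finset ℤ)} → ℕ => (1 : ℝ)) 1 :=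
        hasSum_single default fun z hz => absurd (Subsingleton.elim z default) hz
      exact h1
  | @insert a s ha IH =>
      set E := consEquiv a s ha with hE
      rw [Finset.prod_insert ha]
      have key : ∀ p : ℕ × ({i // i ∈ s} → ℕ),
          (∏ i ∈ insert a s, g i (extz (insert a s) (E.symm p) i))
            = g a p.1 * ∏ i ∈ s, g i (extz s p.2 i) := by
        intro p
        rw [Finset.prod_insert ha]
        have h1 : extz (insert a s) (E.symm p) a = p.1 := by
          rw [extz_mem _ _ (Finset.mem_insert_self a s)]
          show (if h : (a : ℤ) ∈ s then p.2 ⟨a, h⟩ else p.1) = p.1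
          rw [dif_neg ha]
        have h2 : ∀ i ∈ s, extz (insert a s) (E.symm p) i = extz s p.2 i := by
          intro i hi
          rw [extz_mem _ _ (Finset.mem_insert_of_mem hi), extz_mem _ _ hi]
          show (if h : (i : ℤ) ∈ s then p.2 ⟨i, h⟩ else p.1) = p.2 ⟨i, hi⟩
          rw [dif_pos hi]
        rw [h1]
        congr 1
        exact Finset.prod_congr rfl fun i hi => by rw [h2 i hi]
      have hga : HasSum (g a) (∑' j, g a j) := (hs a).hasSum
      have hFnn : ∀ z : {i // i ∈ s} → ℕ, 0 ≤ ∏ i ∈ s, g i (extz s z i) :=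
        fun z => Finset.prod_nonneg fun i _ => h0 _ _
      have hSum2 : Summable (fun p : ℕ × ({i // i ∈ s} → ℕ) =>
          g a p.1 * ∏ i ∈ s, g i (extz s p.2 i)) :=
        (hs a).mul_of_nonneg IH.summable (fun j => h0 a j) hFnn
      have hval : (∑' j, g a j) * (∏ i ∈ s, ∑' j, g i j)
          = ∑' p : ℕ × ({i // i ∈ s} → ℕ), g a p.1 * ∏ i ∈ s, g i (extz s p.2 i) :=
        HasSum.mul_eq hga IH hSum2.hasSum
      have hprod : HasSum (fun p : ℕ × ({i // i ∈ s} → ℕ) =>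
          g a p.1 * ∏ i ∈ s, g i (extz s p.2 i))
          ((∑' j, g a j) * ∏ i ∈ s, ∑' j, g i j) := by
        rw [hval]; exact hSum2.hasSum
      have hfun : (fun p : ℕ × ({i // i ∈ s} → ℕ) => g a p.1 * ∏ i ∈ s, g i (extz s p.2 i))
          = (fun z : {i // i ∈ insert a s} → ℕ =>
              ∏ i ∈ insert a s, g i (extz (insert a s) z i)) ∘ E.symm :=
        funext fun p => (key p).symm
      rw [hfun] at hprod
      exact (E.symm.hasSum_iff).1 hprod


/-- product-like measure with marginal densities `a` -/
def PL (μ : Measure (ℤ → ℕ)) (a : ℤ → ℕ → ℝ) : Prop :=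
  ∀ (s : Finset ℤ) (y : ℤ → ℕ), μ (cylE s y) = ENNReal.ofReal (∏ i ∈ s, a i (y i))

/-- the algebra of cylinder events -/
def cylAlg : Set (Set (ℤ → ℕ)) :=
  {B | ∃ (s : Finset ℤ) (S : Set ({i // i ∈ s} → ℕ)), B = res s ⁻¹' S}

lemma res_preimage_lift {s t : Finset ℤ} (hst : s ⊆ t) (S : Set ({i // i ∈ s} → ℕ)) :
    res s ⁻¹' S = res t ⁻¹' ((fun w : {i // i ∈ t} → ℕ => fun i : {i // i ∈ s} =>
      w ⟨i, hst i.2⟩) ⁻¹' S) := by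
  ext x; rfl

lemma isSetAlgebra_cylAlg : IsSetAlgebra cylAlg where
  empty_mem := ⟨∅, ∅, by simp⟩
  compl_mem := by
    rintro B ⟨s, S, rfl⟩
    exact ⟨s, Sᶜ, by simp [Set.preimage_compl]⟩
  union_mem := by
    rintro B C ⟨s, S, rfl⟩ ⟨t, T, rfl⟩
    refine ⟨s ∪ t,
      ((fun w : {i // i ∈ s ∪ t} → ℕ => fun i : {i // i ∈ s} =>
          w ⟨i, Finset.subset_union_left i.2⟩) ⁻¹' S) ∪
      ((fun w : {i // i ∈ s ∪ t} → ℕ => fun i : {i // i ∈ t} =>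
          w ⟨i, Finset.subset_union_right i.2⟩) ⁻¹' T), ?_⟩
    rw [res_preimage_lift (Finset.subset_union_left (s₂ := t)) S,
      res_preimage_lift (Finset.subset_union_right (s₁ := s)) T, ← Set.preimage_union]

lemma generateFrom_cylAlg :
    (inferInstance : MeasurableSpace (ℤ → ℕ)) = MeasurableSpace.generateFrom cylAlg := by
  refine le_antisymm ?_ (MeasurableSpace.generateFrom_le ?_)
  · rw [show (inferInstance : MeasurableSpace (ℤ → ℕ)) = MeasurableSpace.pi from rfl]
    refine iSup_le fun i => ?_
    rw [← measurable_iff_comap_le]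
    intro U _
    refine MeasurableSpace.measurableSet_generateFrom ?_
    exact ⟨{i}, {z | z ⟨i, Finset.mem_singleton_self i⟩ ∈ U}, rfl⟩
  · rintro B ⟨s, S, rfl⟩
    exact (measurable_pi_lambda _ fun i => measurable_pi_apply _) S.to_countable.measurableSet



lemma measurableSet_S {s : Finset ℤ} (S : Set ({i // i ∈ s} → ℕ)) : MeasurableSet S :=
  S.to_countable.measurableSet

lemma PL_res_apply {μ : Measure (ℤ → ℕ)} {a : ℤ → ℕ → ℝ} (hμ : PL μ a)
    (s : Finset ℤ) (S : Set ({i // i ∈ s} → ℕ)) :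
    μ (res s ⁻¹' S) = ∑' z : S,
      ENNReal.ofReal (∏ i ∈ s, a i (extz s (z : {i // i ∈ s} → ℕ) i)) := by
  rw [res_preimage]
  rw [measure_iUnion ?_ fun z => measurableSet_cylE _ _]
  · exact tsum_congr fun z => hμ s _
  · intro z w hzw
    exact disjoint_cylE s (fun hc => hzw (Subtype.ext hc))

lemma measure_decomp (μ : Measure (ℤ → ℕ)) (s : Finset ℤ) {A : Set (ℤ → ℕ)}
    (hA : MeasurableSet A) :
    μ A = ∑' z : {i // i ∈ s} → ℕ, μ (A ∩ cylE s (extz s z)) := by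
  have hcover : A = ⋃ z : {i // i ∈ s} → ℕ, A ∩ cylE s (extz s z) := by
    ext x
    simp only [Set.mem_iUnion, Set.mem_inter_iff]
    constructor
    · intro hx; exact ⟨res s x, hx, (mem_cylE_iff_res _ _ _).2 rfl⟩
    · rintro ⟨z, hx, -⟩; exact hx
  conv_lhs => rw [hcover]
  rw [measure_iUnion]
  · intro z w hzw
    exact Disjoint.mono Set.inter_subset_right Set.inter_subset_right
      (disjoint_cylE s hzw)
  · exact fun z => hA.inter (measurableSet_cylE _ _)

/-- Main approximation bound: if all cylinder discrepancies are at most `ε`,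
then `μ A ≤ ν A + ε` for every measurable `A`. -/
lemma main_bound {μ ν : Measure (ℤ → ℕ)} [IsProbabilityMeasure μ] [IsProbabilityMeasure ν]
    {a b : ℤ → ℕ → ℝ} (hμ : PL μ a) (hν : PL ν b)
    (ha0 : ∀ i j, 0 ≤ a i j) (hb0 : ∀ i j, 0 ≤ b i j)
    (ha1 : ∀ i, Summable (a i)) (hb1 : ∀ i, Summable (b i))
    {ε : ℝ}
    (hε : ∀ s : Finset ℤ, ∑' z : {i // i ∈ s} → ℕ,
      |∏ i ∈ s, a i (extz s z i) - ∏ i ∈ s, b i (extz s z i)| ≤ ε)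
    {A : Set (ℤ → ℕ)} (hA : MeasurableSet A) :
    μ A ≤ ν A + ENNReal.ofReal ε := by
  classical
  -- the bound for cylinder-algebra sets
  have hcyl : ∀ B ∈ cylAlg, μ B ≤ ν B + ENNReal.ofReal ε := by
    rintro B ⟨s, S, rfl⟩
    rw [PL_res_apply hμ, PL_res_apply hν]
    set F := fun z : {i // i ∈ s} → ℕ => ∏ i ∈ s, a i (extz s z i) with hF
    set G := fun z : {i // i ∈ s} → ℕ => ∏ i ∈ s, b i (extz s z i) with hG
    have hFG : Summable fun z => |F z - G z| := by
      have hFs : Summable F := (hasSum_prod_marginals a ha0 ha1 s).summable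
      have hGs : Summable G := (hasSum_prod_marginals b hb0 hb1 s).summable
      refine (hFs.add hGs).of_nonneg_of_le (fun z => abs_nonneg _) fun z => ?_
      have h1 : 0 ≤ F z := Finset.prod_nonneg fun i _ => ha0 _ _
      have h2 : 0 ≤ G z := Finset.prod_nonneg fun i _ => hb0 _ _
      rw [abs_sub_le_iff] -- maybe; fallback below
      constructor <;> nlinarith
    calc ∑' z : S, ENNReal.ofReal (F z)
        ≤ ∑' z : S, (ENNReal.ofReal (G z) + ENNReal.ofReal |F z - G z|) := by
          refine ENNReal.tsum_le_tsum fun z => ?_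
          rw [← ENNReal.ofReal_add (Finset.prod_nonneg fun i _ => hb0 _ _) (abs_nonneg _)]
          refine ENNReal.ofReal_le_ofReal ?_
          have := abs_sub_abs_le_abs_sub (F (z : {i // i ∈ s} → ℕ)) (G z)
          have h1 : F (z : {i // i ∈ s} → ℕ) - G z ≤ |F z - G z| := le_abs_self _
          linarith
      _ = (∑' z : S, ENNReal.ofReal (G z)) + ∑' z : S, ENNReal.ofReal |F z - G z| :=
          ENNReal.tsum_add
      _ ≤ (∑' z : S, ENNReal.ofReal (G z)) + ENNReal.ofReal ε := by
          gcongr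
          calc ∑' z : S, ENNReal.ofReal |F z - G z|
              ≤ ∑' z : {i // i ∈ s} → ℕ, ENNReal.ofReal |F z - G z| := by
                rw [tsum_subtype S (fun z => ENNReal.ofReal |F z - G z|)]
                exact ENNReal.tsum_le_tsum fun z => Set.indicator_le_self _ _ _
            _ = ENNReal.ofReal (∑' z : {i // i ∈ s} → ℕ, |F z - G z|) :=
                (ENNReal.ofReal_tsum_of_nonneg (fun z => abs_nonneg _) hFG).symm
            _ ≤ ENNReal.ofReal ε := ENNReal.ofReal_le_ofReal (hε s)
  -- measure-dense approximation
  have hdense : (μ + ν).MeasureDense cylAlg :=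
    Measure.MeasureDense.of_generateFrom_isSetAlgebra_finite (μ + ν) isSetAlgebra_cylAlg
      generateFrom_cylAlg
  refine ENNReal.le_of_forall_pos_le_add fun η hη hfin => ?_
  obtain ⟨B, hB, hAB⟩ := hdense.approx A hA (measure_ne_top _ _) η
    (by exact_mod_cast hη)
  have hABμ : μ A ≤ μ B + μ (A ∆ B) := by
    refine le_trans (measure_mono fun x hx => ?_) (measure_union_le _ _)
    by_cases hxB : x ∈ B
    · exact Or.inl hxB
    · exact Or.inr (Or.inl ⟨hx, hxB⟩)
  have hBAν : ν B ≤ ν A + ν (A ∆ B) := by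
    refine le_trans (measure_mono fun x hx => ?_) (measure_union_le _ _)
    by_cases hxA : x ∈ A
    · exact Or.inl hxA
    · exact Or.inr (Or.inr ⟨hx, hxA⟩)
  have hsum : μ (A ∆ B) + ν (A ∆ B) ≤ ENNReal.ofReal η := by
    have : (μ + ν) (A ∆ B) ≤ ENNReal.ofReal η := le_of_lt hAB
    simpa [Measure.add_apply] using this
  calc μ A ≤ μ B + μ (A ∆ B) := hABμ
    _ ≤ (ν B + ENNReal.ofReal ε) + μ (A ∆ B) := by gcongr; exact hcyl B hB
    _ ≤ ((ν A + ν (A ∆ B)) + ENNReal.ofReal ε) + μ (A ∆ B) := by gcongr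
    _ = ν A + ENNReal.ofReal ε + (μ (A ∆ B) + ν (A ∆ B)) := by ring
    _ ≤ ν A + ENNReal.ofReal ε + ENNReal.ofReal η := by gcongr
    _ ≤ ν A + ENNReal.ofReal ε + η := by
        gcongr
        exact ENNReal.ofReal_coe_nnreal.le


lemma sqrt_prod {ι : Type*} (s : Finset ι) (f : ι → ℝ) (h : ∀ i ∈ s, 0 ≤ f i) :
    Real.sqrt (∏ i ∈ s, f i) = ∏ i ∈ s, Real.sqrt (f i) := by
  classical
  induction s using Finset.induction_on with
  | empty => rw [Finset.prod_empty, Finset.prod_empty, Real.sqrt_one]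
  | @insert a t ha IH =>
      rw [Finset.prod_insert ha, Finset.prod_insert ha,
        Real.sqrt_mul (h a (Finset.mem_insert_self a t)),
        IH fun i hi => h i (Finset.mem_insert_of_mem hi)]

lemma one_sub_prod_le_sum {ι : Type*} (s : Finset ι) (f : ι → ℝ)
    (h0 : ∀ i ∈ s, 0 ≤ f i) (h1 : ∀ i ∈ s, f i ≤ 1) :
    1 - ∏ i ∈ s, f i ≤ ∑ i ∈ s, (1 - f i) := by
  classical
  induction s using Finset.induction_on with
  | empty => rw [Finset.prod_empty, Finset.sum_empty]; norm_num
  | @insert a t ha IH =>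
      rw [Finset.prod_insert ha, Finset.sum_insert ha]
      have hprod0 : 0 ≤ ∏ i ∈ t, f i :=
        Finset.prod_nonneg fun i hi => h0 i (Finset.mem_insert_of_mem hi)
      have hprod1 : ∏ i ∈ t, f i ≤ 1 :=
        Finset.prod_le_one (fun i hi => h0 i (Finset.mem_insert_of_mem hi))
          (fun i hi => h1 i (Finset.mem_insert_of_mem hi))
      have hIH := IH (fun i hi => h0 i (Finset.mem_insert_of_mem hi))
        (fun i hi => h1 i (Finset.mem_insert_of_mem hi))
      have ha0 := h0 a (Finset.mem_insert_self a t)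
      have ha1 := h1 a (Finset.mem_insert_self a t)
      nlinarith

/-- Cauchy–Schwarz for countable sums. -/
lemma tsum_cauchy_schwarz {ι : Type*} {f g : ι → ℝ}
    (hf0 : ∀ x, 0 ≤ f x) (hg0 : ∀ x, 0 ≤ g x)
    (hf : Summable fun x => f x ^ 2) (hg : Summable fun x => g x ^ 2) :
    ∑' x, f x * g x ≤ Real.sqrt (∑' x, f x ^ 2) * Real.sqrt (∑' x, g x ^ 2) := by
  have hfg : Summable fun x => f x * g x := by
    refine ((hf.add hg).div_const 2).of_nonneg_of_le
      (fun x => mul_nonneg (hf0 x) (hg0 x)) fun x => ?_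
    have := sq_nonneg (f x - g x)
    nlinarith
  refine Summable.tsum_le_of_sum_le hfg fun s => ?_
  have hcs := Finset.sum_mul_sq_le_sq_mul_sq s f g
  have h1 : ∑ i ∈ s, f i ^ 2 ≤ ∑' x, f x ^ 2 := Summable.sum_le_tsum s (fun i _ => sq_nonneg _) hf
  have h2 : ∑ i ∈ s, g i ^ 2 ≤ ∑' x, g x ^ 2 := Summable.sum_le_tsum s (fun i _ => sq_nonneg _) hg
  have hs0 : 0 ≤ ∑ i ∈ s, f i * g i :=
    Finset.sum_nonneg fun i _ => mul_nonneg (hf0 i) (hg0 i)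
  rw [← Real.sqrt_mul (tsum_nonneg fun x => sq_nonneg (f x))]
  rw [Real.le_sqrt hs0 (mul_nonneg (tsum_nonneg fun x => sq_nonneg (f x))
    (tsum_nonneg fun x => sq_nonneg (g x)))]
  calc (∑ i ∈ s, f i * g i) ^ 2 ≤ (∑ i ∈ s, f i ^ 2) * ∑ i ∈ s, g i ^ 2 := hcs
    _ ≤ (∑' x, f x ^ 2) * ∑' x, g x ^ 2 :=
        mul_le_mul h1 h2 (Finset.sum_nonneg fun i _ => sq_nonneg (g i))
          (tsum_nonneg fun x => sq_nonneg (f x))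

/-- Hellinger affinity of the marginals at coordinate `i`. -/
def rho (a b : ℤ → ℕ → ℝ) (i : ℤ) : ℝ := ∑' j, Real.sqrt (a i j * b i j)

lemma sqrt_summable {a b : ℤ → ℕ → ℝ} (ha0 : ∀ i j, 0 ≤ a i j) (hb0 : ∀ i j, 0 ≤ b i j)
    (ha1 : ∀ i, Summable (a i)) (hb1 : ∀ i, Summable (b i)) (i : ℤ) :
    Summable fun j => Real.sqrt (a i j * b i j) := by
  refine ((ha1 i).add (hb1 i)).of_nonneg_of_le (fun j => Real.sqrt_nonneg _) fun j => ?_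
  rw [Real.sqrt_mul (ha0 i j)]
  have h1 := Real.sq_sqrt (ha0 i j)
  have h2 := Real.sq_sqrt (hb0 i j)
  have h3 := Real.sqrt_nonneg (a i j)
  have h4 := Real.sqrt_nonneg (b i j)
  nlinarith [sq_nonneg (Real.sqrt (a i j) - Real.sqrt (b i j))]

lemma rho_nonneg {a b : ℤ → ℕ → ℝ} (i : ℤ) : 0 ≤ rho a b i :=
  tsum_nonneg fun j => Real.sqrt_nonneg _

lemma rho_le_one {a b : ℤ → ℕ → ℝ} (ha0 : ∀ i j, 0 ≤ a i j) (hb0 : ∀ i j, 0 ≤ b i j)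
    (ha1 : ∀ i, HasSum (a i) 1) (hb1 : ∀ i, HasSum (b i) 1) (i : ℤ) :
    rho a b i ≤ 1 := by
  have hsum := sqrt_summable ha0 hb0 (fun i => (ha1 i).summable)
    (fun i => (hb1 i).summable) i
  have hab : Summable fun j => (a i j + b i j) / 2 :=
    (((ha1 i).summable.add (hb1 i).summable).div_const 2)
  have hle : ∀ j, Real.sqrt (a i j * b i j) ≤ (a i j + b i j) / 2 := by
    intro j
    rw [Real.sqrt_mul (ha0 i j)]
    have h1 := Real.sq_sqrt (ha0 i j)
    have h2 := Real.sq_sqrt (hb0 i j)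
    nlinarith [sq_nonneg (Real.sqrt (a i j) - Real.sqrt (b i j))]
  calc rho a b i ≤ ∑' j, (a i j + b i j) / 2 := Summable.tsum_le_tsum hle hsum hab
    _ = 1 := by
        rw [tsum_div_const, Summable.tsum_add (ha1 i).summable (hb1 i).summable,
          (ha1 i).tsum_eq, (hb1 i).tsum_eq]
        norm_num

/-- The key Hellinger estimate for the total cylinder discrepancy. -/
lemma hellinger_bound {a b : ℤ → ℕ → ℝ}
    (ha0 : ∀ i j, 0 ≤ a i j) (hb0 : ∀ i j, 0 ≤ b i j)
    (ha1 : ∀ i, HasSum (a i) 1) (hb1 : ∀ i, HasSum (b i) 1)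
    (s : Finset ℤ) {d : ℝ} (hd : ∑ i ∈ s, (1 - rho a b i) ≤ d) :
    ∑' z : {i // i ∈ s} → ℕ,
      |∏ i ∈ s, a i (extz s z i) - ∏ i ∈ s, b i (extz s z i)| ≤ Real.sqrt (8 * d) := by
  classical
  set F := fun z : {i // i ∈ s} → ℕ => ∏ i ∈ s, a i (extz s z i) with hFdef
  set G := fun z : {i // i ∈ s} → ℕ => ∏ i ∈ s, b i (extz s z i) with hGdef
  have ha1' : ∀ i, Summable (a i) := fun i => (ha1 i).summable
  have hb1' : ∀ i, Summable (b i) := fun i => (hb1 i).summable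
  have hF : HasSum F 1 := by
    have := hasSum_prod_marginals a ha0 ha1' s
    have h1 : (∏ i ∈ s, ∑' j, a i j) = 1 := by
      rw [Finset.prod_congr rfl fun i _ => (ha1 i).tsum_eq]; simp
    rwa [h1] at this
  have hG : HasSum G 1 := by
    have := hasSum_prod_marginals b hb0 hb1' s
    have h1 : (∏ i ∈ s, ∑' j, b i j) = 1 := by
      rw [Finset.prod_congr rfl fun i _ => (hb1 i).tsum_eq]; simp
    rwa [h1] at this
  set R := ∏ i ∈ s, rho a b i with hRdef
  have hFG : HasSum (fun z => Real.sqrt (F z) * Real.sqrt (G z)) R := by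
    have := hasSum_prod_marginals (fun i j => Real.sqrt (a i j * b i j))
      (fun i j => Real.sqrt_nonneg _) (sqrt_summable ha0 hb0 ha1' hb1') s
    refine this.congr_fun fun z => .symm ?_
    calc ∏ i ∈ s, Real.sqrt (a i (extz s z i) * b i (extz s z i))
        = ∏ i ∈ s, (Real.sqrt (a i (extz s z i)) * Real.sqrt (b i (extz s z i))) :=
          Finset.prod_congr rfl fun i _ => Real.sqrt_mul (ha0 _ _) _
      _ = (∏ i ∈ s, Real.sqrt (a i (extz s z i)))
            * ∏ i ∈ s, Real.sqrt (b i (extz s z i)) := Finset.prod_mul_distrib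
      _ = Real.sqrt (F z) * Real.sqrt (G z) := by
          rw [sqrt_prod _ _ fun i _ => ha0 _ _, sqrt_prod _ _ fun i _ => hb0 _ _]
  have hF0 : ∀ z, 0 ≤ F z := fun z => Finset.prod_nonneg fun i _ => ha0 _ _
  have hG0 : ∀ z, 0 ≤ G z := fun z => Finset.prod_nonneg fun i _ => hb0 _ _
  -- the two square sums
  have hfsq : Summable fun z => (Real.sqrt (F z) - Real.sqrt (G z)) ^ 2 := by
    have : ∀ z, (Real.sqrt (F z) - Real.sqrt (G z)) ^ 2
        = F z + G z - 2 * (Real.sqrt (F z) * Real.sqrt (G z)) := by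
      intro z
      have := Real.sq_sqrt (hF0 z); have := Real.sq_sqrt (hG0 z); nlinarith
    exact Summable.congr (((hF.summable.add hG.summable).sub
      (hFG.summable.mul_left 2))) fun z => (this z).symm
  have hfsq_val : ∑' z, (Real.sqrt (F z) - Real.sqrt (G z)) ^ 2 = 2 - 2 * R := by
    have heq : ∀ z, (Real.sqrt (F z) - Real.sqrt (G z)) ^ 2
        = F z + G z - 2 * (Real.sqrt (F z) * Real.sqrt (G z)) := by
      intro z
      have := Real.sq_sqrt (hF0 z); have := Real.sq_sqrt (hG0 z); nlinarith
    calc ∑' z, (Real.sqrt (F z) - Real.sqrt (G z)) ^ 2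
        = ∑' z, (F z + G z - 2 * (Real.sqrt (F z) * Real.sqrt (G z))) :=
          tsum_congr heq
      _ = 2 - 2 * R := by
          rw [Summable.tsum_sub ((hF.add hG).summable) (hFG.summable.mul_left 2),
            Summable.tsum_add hF.summable hG.summable, hF.tsum_eq, hG.tsum_eq,
            tsum_mul_left, hFG.tsum_eq]
          ring
  have hgsq : Summable fun z => (Real.sqrt (F z) + Real.sqrt (G z)) ^ 2 := by
    have : ∀ z, (Real.sqrt (F z) + Real.sqrt (G z)) ^ 2
        = F z + G z + 2 * (Real.sqrt (F z) * Real.sqrt (G z)) := by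
      intro z
      have := Real.sq_sqrt (hF0 z); have := Real.sq_sqrt (hG0 z); nlinarith
    exact Summable.congr (((hF.summable.add hG.summable).add
      (hFG.summable.mul_left 2))) fun z => (this z).symm
  have hgsq_val : ∑' z, (Real.sqrt (F z) + Real.sqrt (G z)) ^ 2 = 2 + 2 * R := by
    have heq : ∀ z, (Real.sqrt (F z) + Real.sqrt (G z)) ^ 2
        = F z + G z + 2 * (Real.sqrt (F z) * Real.sqrt (G z)) := by
      intro z
      have := Real.sq_sqrt (hF0 z); have := Real.sq_sqrt (hG0 z); nlinarith
    calc ∑' z, (Real.sqrt (F z) + Real.sqrt (G z)) ^ 2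
        = ∑' z, (F z + G z + 2 * (Real.sqrt (F z) * Real.sqrt (G z))) :=
          tsum_congr heq
      _ = 2 + 2 * R := by
          rw [Summable.tsum_add ((hF.add hG).summable) (hFG.summable.mul_left 2),
            Summable.tsum_add hF.summable hG.summable, hF.tsum_eq, hG.tsum_eq,
            tsum_mul_left, hFG.tsum_eq]
          ring
  have hR0 : 0 ≤ R := Finset.prod_nonneg fun i _ => rho_nonneg i
  have hR1 : R ≤ 1 := Finset.prod_le_one (fun i _ => rho_nonneg i)
    (fun i _ => rho_le_one ha0 hb0 ha1 hb1 i)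
  have hRd : 1 - R ≤ d :=
    le_trans (one_sub_prod_le_sum s _ (fun i _ => rho_nonneg i)
      (fun i _ => rho_le_one ha0 hb0 ha1 hb1 i)) hd
  have hd0 : (0:ℝ) ≤ d := le_trans (by linarith) hRd
  -- pointwise |F - G| = |√F - √G| * (√F + √G)
  have hpt : ∀ z, |F z - G z|
      = |Real.sqrt (F z) - Real.sqrt (G z)| * (Real.sqrt (F z) + Real.sqrt (G z)) := by
    intro z
    have h1 := Real.sq_sqrt (hF0 z)
    have h2 := Real.sq_sqrt (hG0 z)
    have h3 : F z - G z = (Real.sqrt (F z) - Real.sqrt (G z))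
        * (Real.sqrt (F z) + Real.sqrt (G z)) := by nlinarith
    rw [h3, abs_mul, abs_of_nonneg (add_nonneg (Real.sqrt_nonneg _) (Real.sqrt_nonneg _))]
  calc ∑' z, |F z - G z|
      = ∑' z, |Real.sqrt (F z) - Real.sqrt (G z)| * (Real.sqrt (F z) + Real.sqrt (G z)) :=
        tsum_congr hpt
    _ ≤ Real.sqrt (∑' z, |Real.sqrt (F z) - Real.sqrt (G z)| ^ 2)
        * Real.sqrt (∑' z, (Real.sqrt (F z) + Real.sqrt (G z)) ^ 2) := by
        refine tsum_cauchy_schwarz (fun z => abs_nonneg _) (fun z => by positivity) ?_ hgsq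
        exact hfsq.congr fun z => by rw [sq_abs]
    _ = Real.sqrt (2 - 2 * R) * Real.sqrt (2 + 2 * R) := by
        rw [show (fun z => |Real.sqrt (F z) - Real.sqrt (G z)| ^ 2)
            = fun z => (Real.sqrt (F z) - Real.sqrt (G z)) ^ 2 from funext fun z => sq_abs _,
          hfsq_val, hgsq_val]
    _ ≤ Real.sqrt (2 * d) * Real.sqrt 4 :=
        mul_le_mul (Real.sqrt_le_sqrt (by linarith)) (Real.sqrt_le_sqrt (by linarith))
          (Real.sqrt_nonneg _) (Real.sqrt_nonneg _)
    _ = Real.sqrt (8 * d) := by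
        rw [← Real.sqrt_mul (by linarith : (0:ℝ) ≤ 2 * d)]
        congr 1
        ring




lemma measurable_shift (n : ℤ) : Measurable (shift n) :=
  measurable_pi_lambda _ fun k => measurable_pi_apply _

lemma PL_of_isProductMeasure {P : Measure (ℤ → ℕ)} {p : ℤ → ℕ → ℝ}
    (hP : IsProductMeasure P p) : PL P p := by
  intro s y
  rw [show cylE s y = {x | ∀ i ∈ s, x i = y i} from rfl, hP.2.2.2 s y,
    ENNReal.ofReal_prod_of_nonneg fun i _ => hP.2.1 i (y i)]

lemma PL_map_shift {P : Measure (ℤ → ℕ)} {p : ℤ → ℕ → ℝ} (hPL : PL P p) :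
    PL (P.map (shift 1)) (fun k => p (k + 1)) := by
  intro s y
  rw [Measure.map_apply (measurable_shift 1) (measurableSet_cylE s y)]
  have hpre : shift 1 ⁻¹' cylE s y
      = cylE (s.map (addRightEmbedding 1)) (fun i => y (i - 1)) := by
    ext x
    simp only [cylE, Set.mem_preimage, Set.mem_setOf_eq, Finset.mem_map, shift]
    constructor
    · rintro h j hj
      obtain ⟨i, hi, rfl⟩ := hj
      show x (i + 1) = y (i + 1 - 1)
      rw [show i + 1 - 1 = i by ring]
      exact h i hi
    · intro h i hi
      have := h (i + 1) ⟨i, hi, rfl⟩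
      rwa [show i + 1 - 1 = i by ring] at this
  rw [hpre, hPL _ _, Finset.prod_map]
  refine congrArg ENNReal.ofReal (Finset.prod_congr rfl fun i _ => ?_)
  show p (i + 1) (y (i + 1 - 1)) = p (i + 1) (y i)
  rw [show i + 1 - 1 = i by ring]


lemma rho_comm (a b : ℤ → ℕ → ℝ) (i : ℤ) : rho a b i = rho b a i :=
  tsum_congr fun j => by rw [mul_comm]

lemma isProb_cond {μ : Measure (ℤ → ℕ)} {C : Set (ℤ → ℕ)} (hC : MeasurableSet C)
    (h0 : μ C ≠ 0) (ht : μ C ≠ ⊤) : IsProbabilityMeasure ((μ C)⁻¹ • μ.restrict C) :=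
  ⟨by rw [Measure.smul_apply, Measure.restrict_apply MeasurableSet.univ, Set.univ_inter,
      smul_eq_mul, ENNReal.inv_mul_cancel h0 ht]⟩

/-- conditioning a product-like measure on a cylinder gives a product-like measure -/
lemma PL_cond {μ : Measure (ℤ → ℕ)} {a : ℤ → ℕ → ℝ} (hPL : PL μ a)
    (ha0 : ∀ i j, 0 ≤ a i j) (s₀ : Finset ℤ) (y : ℤ → ℕ)
    (hcne : ENNReal.ofReal (∏ i ∈ s₀, a i (y i)) ≠ 0) :
    PL ((ENNReal.ofReal (∏ i ∈ s₀, a i (y i)))⁻¹ • μ.restrict (cylE s₀ y))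
      (fun i j => if i ∈ s₀ then (if j = y i then 1 else 0) else a i j) := by
  classical
  intro s w
  rw [Measure.smul_apply, Measure.restrict_apply (measurableSet_cylE s w), smul_eq_mul]
  by_cases hcompat : ∀ i ∈ s, i ∈ s₀ → w i = y i
  · rw [cylE_inter_of_compat hcompat, hPL _ _]
    have hsplit : s ∪ s₀ = (s \ s₀) ∪ s₀ := (Finset.sdiff_union_self_eq_union).symm
    have hdisj : Disjoint (s \ s₀) s₀ := Finset.sdiff_disjoint
    rw [hsplit, Finset.prod_union hdisj]
    have h1 : ∏ i ∈ s₀, a i (Finset.piecewise s w y i) = ∏ i ∈ s₀, a i (y i) := by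
      refine Finset.prod_congr rfl fun i hi => ?_
      by_cases h : i ∈ s
      · rw [Finset.piecewise_eq_of_mem _ _ _ h, hcompat i h hi]
      · rw [Finset.piecewise_eq_of_notMem _ _ _ h]
    have h2 : ∏ i ∈ s \ s₀, a i (Finset.piecewise s w y i)
        = ∏ i ∈ s \ s₀, a i (w i) := by
      refine Finset.prod_congr rfl fun i hi => ?_
      rw [Finset.piecewise_eq_of_mem _ _ _ (Finset.mem_sdiff.1 hi).1]
    rw [h1, h2, ENNReal.ofReal_mul (Finset.prod_nonneg fun i _ => ha0 _ _)]
    rw [← mul_assoc, mul_comm (ENNReal.ofReal (∏ i ∈ s₀, a i (y i)))⁻¹, mul_assoc,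
      ENNReal.inv_mul_cancel hcne ENNReal.ofReal_ne_top, mul_one]
    congr 1
    rw [← Finset.prod_filter_mul_prod_filter_not s (· ∈ s₀)]
    have h3 : ∏ i ∈ s.filter (· ∈ s₀), (if i ∈ s₀ then (if w i = y i then 1 else 0)
        else a i (w i)) = 1 := by
      refine Finset.prod_eq_one fun i hi => ?_
      obtain ⟨his, hi0⟩ := Finset.mem_filter.1 hi
      rw [if_pos hi0, if_pos (hcompat i his hi0)]
    have h4 : ∏ i ∈ s.filter (¬ · ∈ s₀), (if i ∈ s₀ then (if w i = y i then 1 else 0)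
        else a i (w i)) = ∏ i ∈ s.filter (¬ · ∈ s₀), a i (w i) := by
      refine Finset.prod_congr rfl fun i hi => ?_
      rw [if_neg (Finset.mem_filter.1 hi).2]
    rw [h3, h4, one_mul]
    refine (Finset.prod_congr ?_ fun i _ => rfl).symm
    rw [Finset.sdiff_eq_filter]
  · push_neg at hcompat
    obtain ⟨i, his, hi0, hne⟩ := hcompat
    rw [cylE_inter_of_not_compat his hi0 hne, measure_empty, mul_zero]
    have hz : (∏ i ∈ s, (if i ∈ s₀ then (if w i = y i then (1:ℝ) else 0) else a i (w i))) = 0 :=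
      Finset.prod_eq_zero his (by rw [if_pos hi0, if_neg hne])
    rw [hz, ENNReal.ofReal_zero]


/-- One-sided absolute continuity from summability of Hellinger distances. -/
lemma ac_one_sided {μ ν : Measure (ℤ → ℕ)} [IsProbabilityMeasure μ] [IsProbabilityMeasure ν]
    {a b : ℤ → ℕ → ℝ} (hPL : PL μ a) (hQL : PL ν b)
    (hapos : ∀ i j, 0 < a i j) (hbpos : ∀ i j, 0 < b i j)
    (ha1 : ∀ i, HasSum (a i) 1) (hb1 : ∀ i, HasSum (b i) 1)
    (hagree : ∀ i : ℤ, i < 0 → a i = b i)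
    (htail : Summable fun k : ℕ => 1 - rho a b (k : ℤ)) :
    μ ≪ ν := by
  classical
  have ha0 : ∀ i j, 0 ≤ a i j := fun i j => (hapos i j).le
  have hb0 : ∀ i j, 0 ≤ b i j := fun i j => (hbpos i j).le
  set f : ℕ → ℝ := fun k => 1 - rho a b (k : ℤ) with hfdef
  set d : ℕ → ℝ := fun n => ∑' m, f (m + (n + 1)) with hddef
  have hrho01 : ∀ i : ℤ, 0 ≤ 1 - rho a b i :=
    fun i => by have := rho_le_one ha0 hb0 ha1 hb1 i; linarith
  refine Measure.AbsolutelyContinuous.mk fun A hA hA0 => ?_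
  have key : ∀ n : ℕ, μ A ≤ ENNReal.ofReal (Real.sqrt (8 * d n)) := by
    intro n
    set s₀ := Finset.Icc (0 : ℤ) (n : ℤ) with hs₀
    have hy : ∀ z : {i // i ∈ s₀} → ℕ, μ (A ∩ cylE s₀ (extz s₀ z))
        ≤ μ (cylE s₀ (extz s₀ z)) * ENNReal.ofReal (Real.sqrt (8 * d n)) := by
      intro z
      set y := extz s₀ z with hy
      set c := ENNReal.ofReal (∏ i ∈ s₀, a i (y i)) with hcdef
      set c' := ENNReal.ofReal (∏ i ∈ s₀, b i (y i)) with hc'def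
      have hcne : c ≠ 0 :=
        (ENNReal.ofReal_pos.2 (Finset.prod_pos fun i _ => hapos _ _)).ne'
      have hc'ne : c' ≠ 0 :=
        (ENNReal.ofReal_pos.2 (Finset.prod_pos fun i _ => hbpos _ _)).ne'
      have hcylμ : μ (cylE s₀ y) = c := hPL s₀ y
      have hcylν : ν (cylE s₀ y) = c' := hQL s₀ y
      set μy := c⁻¹ • μ.restrict (cylE s₀ y) with hμydef
      set νy := c'⁻¹ • ν.restrict (cylE s₀ y) with hνydef
      have hμyPL : PL μy (fun i j => if i ∈ s₀ then (if j = y i then 1 else 0) else a i j) :=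
        PL_cond hPL ha0 s₀ y hcne
      have hνyPL : PL νy (fun i j => if i ∈ s₀ then (if j = y i then 1 else 0) else b i j) :=
        PL_cond hQL hb0 s₀ y hc'ne
      haveI : IsProbabilityMeasure μy := by
        rw [hμydef, ← hcylμ]
        exact isProb_cond (measurableSet_cylE _ _) (hcylμ ▸ hcne) (measure_ne_top _ _)
      haveI : IsProbabilityMeasure νy := by
        rw [hνydef, ← hcylν]
        exact isProb_cond (measurableSet_cylE _ _) (hcylν ▸ hc'ne) (measure_ne_top _ _)
      set aY := fun i j => if i ∈ s₀ then (if j = y i then (1:ℝ) else 0) else a i j with haYdef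
      set bY := fun i j => if i ∈ s₀ then (if j = y i then (1:ℝ) else 0) else b i j with hbYdef
      have haY0 : ∀ i j, 0 ≤ aY i j := by
        intro i j
        by_cases h : i ∈ s₀ <;> simp only [haYdef, h, if_true, if_false]
        · split <;> norm_num
        · exact ha0 i j
      have hbY0 : ∀ i j, 0 ≤ bY i j := by
        intro i j
        by_cases h : i ∈ s₀ <;> simp only [hbYdef, h, if_true, if_false]
        · split <;> norm_num
        · exact hb0 i j
      have haY1 : ∀ i, HasSum (aY i) 1 := by
        intro i
        by_cases h : i ∈ s₀ <;> simp only [haYdef, h, if_true, if_false]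
        · exact hasSum_ite_eq (y i) 1
        · exact ha1 i
      have hbY1 : ∀ i, HasSum (bY i) 1 := by
        intro i
        by_cases h : i ∈ s₀ <;> simp only [hbYdef, h, if_true, if_false]
        · exact hasSum_ite_eq (y i) 1
        · exact hb1 i
      -- the Hellinger sums
      have hrhoY : ∀ i : ℤ, ¬ ((n:ℤ) < i) → rho aY bY i = 1 := by
        intro i hi
        by_cases h : i ∈ s₀
        · have hpt : ∀ j, Real.sqrt (aY i j * bY i j) = if j = y i then 1 else 0 := by
            intro j
            by_cases hj : j = y i <;>
              simp [haYdef, hbYdef, h, hj]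
          rw [rho, tsum_congr hpt]
          exact (hasSum_ite_eq (y i) 1).tsum_eq
        · have hineg : i < 0 := by
            rw [hs₀, Finset.mem_Icc, not_and_or] at h
            rcases h with h | h
            · omega
            · omega
          have hab : aY i = a i := by simp [haYdef, h]
          have hbb : bY i = b i := by simp [hbYdef, h]
          have hba : b i = a i := (hagree i hineg).symm
          have hpt : ∀ j, Real.sqrt (aY i j * bY i j) = a i j := by
            intro j
            rw [hab, hbb, hba, Real.sqrt_mul_self (ha0 i j)]
          rw [rho, tsum_congr hpt]
          exact (ha1 i).tsum_eq
      have hrhoY2 : ∀ i : ℤ, (n:ℤ) < i → rho aY bY i = rho a b i := by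
        intro i hi
        have h : i ∉ s₀ := by rw [hs₀, Finset.mem_Icc]; omega
        simp only [rho, haYdef, hbYdef, h, if_false]
      have hdsum : ∀ s : Finset ℤ, ∑ i ∈ s, (1 - rho aY bY i) ≤ d n := by
        intro s
        have h1 : ∑ i ∈ s, (1 - rho aY bY i)
            = ∑ i ∈ s.filter (fun i => (n:ℤ) < i), (1 - rho aY bY i) := by
          refine (Finset.sum_filter_of_ne fun i hi hne => ?_).symm
          by_contra h
          exact hne (by rw [hrhoY i h]; ring)
        have h2 : ∑ i ∈ s.filter (fun i => (n:ℤ) < i), (1 - rho aY bY i)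
            = ∑ i ∈ s.filter (fun i => (n:ℤ) < i), (1 - rho a b i) :=
          Finset.sum_congr rfl fun i hi =>
            by rw [hrhoY2 i (Finset.mem_filter.1 hi).2]
        rw [h1, h2]
        -- transfer to ℕ and compare with the tail sum
        set F := s.filter (fun i => (n:ℤ) < i) with hFdef
        have hmem : ∀ i ∈ F, (n:ℤ) + 1 ≤ i := fun i hi => (Finset.mem_filter.1 hi).2
        have hsummable : Summable fun m : ℕ => f (m + (n + 1)) :=
          (summable_nat_add_iff (n + 1)).2 htail
        have himg : ∑ i ∈ F, (1 - rho a b i)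
            = ∑ m ∈ F.image (fun i => (i - ((n:ℤ) + 1)).toNat), f (m + (n + 1)) := by
          rw [Finset.sum_image ?_]
          · refine Finset.sum_congr rfl fun i hi => ?_
            have h3 : ((((i - ((n:ℤ) + 1)).toNat) + (n + 1) : ℕ) : ℤ) = i := by
              have := hmem i hi
              push_cast
              rw [Int.toNat_of_nonneg (by omega)]
              ring
            rw [hfdef]
            simp only
            rw [h3]
          · intro i hi j hj hij
            have h3 := Int.toNat_of_nonneg (show (0:ℤ) ≤ i - ((n:ℤ)+1) by
              have := hmem i hi; omega)
            have h4 := Int.toNat_of_nonneg (show (0:ℤ) ≤ j - ((n:ℤ)+1) by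
              have := hmem j hj; omega)
            dsimp only at hij
            omega
        rw [himg]
        exact Summable.sum_le_tsum _ (fun m _ => hrho01 _) hsummable
      have hεs : ∀ s : Finset ℤ, ∑' zz : {i // i ∈ s} → ℕ,
          |∏ i ∈ s, aY i (extz s zz i) - ∏ i ∈ s, bY i (extz s zz i)|
          ≤ Real.sqrt (8 * d n) :=
        fun s => hellinger_bound haY0 hbY0 haY1 hbY1 s (hdsum s)
      have hbound := main_bound hμyPL hνyPL haY0 hbY0
        (fun i => (haY1 i).summable) (fun i => (hbY1 i).summable) hεs hA
      have hνA : νy A = 0 := by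
        rw [hνydef, Measure.smul_apply, Measure.restrict_apply hA, smul_eq_mul,
          measure_mono_null Set.inter_subset_left hA0, mul_zero]
      have hμA : μ (A ∩ cylE s₀ y) = c * μy A := by
        rw [hμydef, Measure.smul_apply, Measure.restrict_apply hA, smul_eq_mul,
          ← mul_assoc, ENNReal.mul_inv_cancel hcne ENNReal.ofReal_ne_top, one_mul]
      rw [hμA, hcylμ]
      calc c * μy A ≤ c * (νy A + ENNReal.ofReal (Real.sqrt (8 * d n))) := by
            gcongr
        _ = c * ENNReal.ofReal (Real.sqrt (8 * d n)) := by rw [hνA, zero_add]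
    calc μ A = ∑' z : {i // i ∈ s₀} → ℕ, μ (A ∩ cylE s₀ (extz s₀ z)) :=
          measure_decomp μ s₀ hA
      _ ≤ ∑' z : {i // i ∈ s₀} → ℕ,
            μ (cylE s₀ (extz s₀ z)) * ENNReal.ofReal (Real.sqrt (8 * d n)) :=
          ENNReal.tsum_le_tsum hy
      _ = (∑' z : {i // i ∈ s₀} → ℕ, μ (cylE s₀ (extz s₀ z)))
            * ENNReal.ofReal (Real.sqrt (8 * d n)) := ENNReal.tsum_mul_right
      _ = μ Set.univ * ENNReal.ofReal (Real.sqrt (8 * d n)) := by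
          congr 1
          rw [measure_decomp μ s₀ MeasurableSet.univ]
          exact tsum_congr fun z => by rw [Set.univ_inter]
      _ = ENNReal.ofReal (Real.sqrt (8 * d n)) := by rw [measure_univ, one_mul]
  -- take the limit
  have hdto : Tendsto d atTop (𝓝 0) := by
    have h1 := tendsto_sum_nat_add f
    exact h1.comp (tendsto_add_atTop_nat 1)
  have hlim : Tendsto (fun n => ENNReal.ofReal (Real.sqrt (8 * d n))) atTop (𝓝 0) := by
    have h2 : Tendsto (fun n => 8 * d n) atTop (𝓝 0) := by
      simpa using hdto.const_mul (8:ℝ)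
    have h3 : Tendsto (fun n => Real.sqrt (8 * d n)) atTop (𝓝 0) := by
      have h4 := (Real.continuous_sqrt.tendsto 0).comp h2
      rw [Real.sqrt_zero] at h4
      exact h4
    have := ENNReal.tendsto_ofReal h3
    simpa [ENNReal.ofReal_zero] using this
  have : μ A ≤ 0 := ge_of_tendsto' hlim key
  exact le_antisymm this (zero_le)


/-- If the Hellinger sums diverge, the measures are not absolutely continuous. -/
lemma not_ac_of_not_summable {μ ν : Measure (ℤ → ℕ)}
    [IsProbabilityMeasure μ] [IsProbabilityMeasure ν]
    {a b : ℤ → ℕ → ℝ} (hPL : PL μ a) (hQL : PL ν b)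
    (ha0 : ∀ i j, 0 ≤ a i j) (hb0 : ∀ i j, 0 ≤ b i j)
    (ha1 : ∀ i, HasSum (a i) 1) (hb1 : ∀ i, HasSum (b i) 1)
    (hns : ¬ Summable fun k : ℕ => 1 - rho a b (k : ℤ)) :
    ¬ (μ ≪ ν) := by
  classical
  intro hac
  have hrho01 : ∀ i : ℤ, 0 ≤ 1 - rho a b i :=
    fun i => by have := rho_le_one ha0 hb0 ha1 hb1 i; linarith
  set R : ℕ → ℝ := fun n => ∏ i ∈ Finset.Icc (0:ℤ) (n:ℤ), rho a b i with hRdef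
  have hIcc : ∀ n : ℕ, Finset.Icc (0:ℤ) (n:ℤ)
      = (Finset.range (n+1)).map ⟨(Nat.cast : ℕ → ℤ), Nat.cast_injective⟩ := by
    intro n
    ext i
    simp only [Finset.mem_Icc, Finset.mem_map, Finset.mem_range,
      Function.Embedding.coeFn_mk]
    constructor
    · rintro ⟨h1, h2⟩
      exact ⟨i.toNat, by omega, by omega⟩
    · rintro ⟨k, hk, rfl⟩
      omega
  have hR0 : ∀ n, 0 ≤ R n := fun n => Finset.prod_nonneg fun i _ => rho_nonneg i
  -- R n → 0
  have hRto : Tendsto R atTop (𝓝 0) := by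
    have hSto : Tendsto (fun n => ∑ k ∈ Finset.range (n+1), (1 - rho a b (k:ℤ)))
        atTop atTop := by
      have := (not_summable_iff_tendsto_nat_atTop_of_nonneg
        (fun k => hrho01 (k:ℤ))).1 hns
      exact this.comp (tendsto_add_atTop_nat 1)
    have hexp : Tendsto (fun n => Real.exp (-(∑ k ∈ Finset.range (n+1),
        (1 - rho a b (k:ℤ))))) atTop (𝓝 0) :=
      Real.tendsto_exp_neg_atTop_nhds_zero.comp hSto
    refine tendsto_of_tendsto_of_tendsto_of_le_of_le tendsto_const_nhds hexp hR0 fun n => ?_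
    have h1 : R n = ∏ k ∈ Finset.range (n+1), rho a b (k:ℤ) := by
      rw [hRdef]; simp only; rw [hIcc n, Finset.prod_map]; rfl
    have h2 : ∑ k ∈ Finset.range (n+1), (rho a b (k:ℤ) - 1)
        = -(∑ k ∈ Finset.range (n+1), (1 - rho a b (k:ℤ))) := by
      rw [← Finset.sum_neg_distrib]
      exact Finset.sum_congr rfl fun k _ => by ring
    calc R n = ∏ k ∈ Finset.range (n+1), rho a b (k:ℤ) := h1
      _ ≤ ∏ k ∈ Finset.range (n+1), Real.exp (rho a b (k:ℤ) - 1) := by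
          refine Finset.prod_le_prod (fun k _ => rho_nonneg _) fun k _ => ?_
          have := Real.add_one_le_exp (rho a b (k:ℤ) - 1)
          linarith
      _ = Real.exp (∑ k ∈ Finset.range (n+1), (rho a b (k:ℤ) - 1)) :=
          (Real.exp_sum _ _).symm
      _ = Real.exp (-(∑ k ∈ Finset.range (n+1), (1 - rho a b (k:ℤ)))) := by rw [h2]
  -- the distinguishing cylinder sets
  set s₀ : ℕ → Finset ℤ := fun n => Finset.Icc (0:ℤ) (n:ℤ) with hs₀def
  set Sset : ∀ n : ℕ, Set ({i // i ∈ s₀ n} → ℕ) := fun n =>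
    {z | ∏ i ∈ s₀ n, b i (extz (s₀ n) z i) ≤ ∏ i ∈ s₀ n, a i (extz (s₀ n) z i)}
    with hSsetdef
  set Aset : ℕ → Set (ℤ → ℕ) := fun n => res (s₀ n) ⁻¹' (Sset n) with hAsetdef
  have hAmeas : ∀ n, MeasurableSet (Aset n) :=
    fun n => measurable_res (s₀ n) (measurableSet_S _)
  -- the Hellinger-affinity bound on cylinder sums
  have hprodsqrt : ∀ n (z : {i // i ∈ s₀ n} → ℕ),
      Real.sqrt ((∏ i ∈ s₀ n, a i (extz (s₀ n) z i)) * ∏ i ∈ s₀ n, b i (extz (s₀ n) z i))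
        = ∏ i ∈ s₀ n, Real.sqrt (a i (extz (s₀ n) z i) * b i (extz (s₀ n) z i)) := by
    intro n z
    rw [← Finset.prod_mul_distrib, sqrt_prod _ _ fun i _ => mul_nonneg (ha0 _ _) (hb0 _ _)]
  have hsqrtsum : ∀ n, HasSum (fun z : {i // i ∈ s₀ n} → ℕ =>
      ∏ i ∈ s₀ n, Real.sqrt (a i (extz (s₀ n) z i) * b i (extz (s₀ n) z i))) (R n) := by
    intro n
    have := hasSum_prod_marginals (fun i j => Real.sqrt (a i j * b i j))
      (fun i j => Real.sqrt_nonneg _)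
      (sqrt_summable ha0 hb0 (fun i => (ha1 i).summable) (fun i => (hb1 i).summable)) (s₀ n)
    exact this
  have hbound : ∀ n, ν (Aset n) ≤ ENNReal.ofReal (R n)
      ∧ μ ((Aset n)ᶜ) ≤ ENNReal.ofReal (R n) := by
    intro n
    have hsub : ∀ (T : Set ({i // i ∈ s₀ n} → ℕ))
        (g : ({i // i ∈ s₀ n} → ℕ) → ℝ) (hg0 : ∀ z, 0 ≤ g z)
        (hgle : ∀ z ∈ T, g z ≤ Real.sqrt ((∏ i ∈ s₀ n, a i (extz (s₀ n) z i))
          * ∏ i ∈ s₀ n, b i (extz (s₀ n) z i))),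
        ∑' z : T, ENNReal.ofReal (g (z : {i // i ∈ s₀ n} → ℕ)) ≤ ENNReal.ofReal (R n) := by
      intro T g hg0 hgle
      calc ∑' z : T, ENNReal.ofReal (g (z : {i // i ∈ s₀ n} → ℕ))
          ≤ ∑' z : T, ENNReal.ofReal (∏ i ∈ s₀ n,
              Real.sqrt (a i (extz (s₀ n) (z : {i // i ∈ s₀ n} → ℕ) i)
                * b i (extz (s₀ n) (z : {i // i ∈ s₀ n} → ℕ) i))) := by
            refine ENNReal.tsum_le_tsum fun z => ENNReal.ofReal_le_ofReal ?_
            rw [← hprodsqrt n]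
            exact hgle _ z.2
        _ ≤ ∑' z : {i // i ∈ s₀ n} → ℕ, ENNReal.ofReal (∏ i ∈ s₀ n,
              Real.sqrt (a i (extz (s₀ n) z i) * b i (extz (s₀ n) z i))) := by
            rw [tsum_subtype T (fun z => ENNReal.ofReal (∏ i ∈ s₀ n,
              Real.sqrt (a i (extz (s₀ n) z i) * b i (extz (s₀ n) z i))))]
            exact ENNReal.tsum_le_tsum fun z => Set.indicator_le_self _ _ _
        _ = ENNReal.ofReal (R n) := by
            rw [← ENNReal.ofReal_tsum_of_nonneg
              (fun z => Finset.prod_nonneg fun i _ => Real.sqrt_nonneg _)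
              (hsqrtsum n).summable, (hsqrtsum n).tsum_eq]
    constructor
    · rw [hAsetdef]
      simp only
      rw [PL_res_apply hQL]
      refine hsub (Sset n) (fun z => ∏ i ∈ s₀ n, b i (extz (s₀ n) z i))
        (fun z => Finset.prod_nonneg fun i _ => hb0 _ _) ?_
      intro z hz
      have hzle : ∏ i ∈ s₀ n, b i (extz (s₀ n) z i)
          ≤ ∏ i ∈ s₀ n, a i (extz (s₀ n) z i) := hz
      have h3 : 0 ≤ ∏ i ∈ s₀ n, b i (extz (s₀ n) z i) :=
        Finset.prod_nonneg fun i _ => hb0 _ _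
      rw [show ((∏ i ∈ s₀ n, a i (extz (s₀ n) z i)) * ∏ i ∈ s₀ n, b i (extz (s₀ n) z i))
        = ((∏ i ∈ s₀ n, a i (extz (s₀ n) z i)) * ∏ i ∈ s₀ n, b i (extz (s₀ n) z i)) from rfl]
      refine (Real.le_sqrt h3 (mul_nonneg (le_trans h3 hzle) h3)).2 ?_
      nlinarith
    · have hcompl : (Aset n)ᶜ = res (s₀ n) ⁻¹' ((Sset n)ᶜ) := by
        rw [hAsetdef]; simp [Set.preimage_compl]
      rw [hcompl, PL_res_apply hPL]
      refine hsub ((Sset n)ᶜ) (fun z => ∏ i ∈ s₀ n, a i (extz (s₀ n) z i))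
        (fun z => Finset.prod_nonneg fun i _ => ha0 _ _) ?_
      intro z hz
      have hzlt : ∏ i ∈ s₀ n, a i (extz (s₀ n) z i)
          < ∏ i ∈ s₀ n, b i (extz (s₀ n) z i) := by
        have := hz
        simp only [hSsetdef, Set.mem_compl_iff, Set.mem_setOf_eq, not_le] at this
        exact this
      have h3 : 0 ≤ ∏ i ∈ s₀ n, a i (extz (s₀ n) z i) :=
        Finset.prod_nonneg fun i _ => ha0 _ _
      refine (Real.le_sqrt h3 (mul_nonneg h3 (le_trans h3 hzlt.le))).2 ?_
      nlinarith
  -- extract a fast subsequence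
  have hex : ∀ m : ℕ, ∃ n, R n ≤ (1/2:ℝ)^m := by
    intro m
    have hpos : (0:ℝ) < (1/2)^m := by positivity
    exact (hRto.eventually (eventually_le_nhds hpos)).exists
  choose g hg using hex
  -- the bad set
  set A : Set (ℤ → ℕ) := ⋂ m, ⋃ j, ⋃ (_ : m ≤ j), Aset (g j) with hAdef
  have hAmeas' : MeasurableSet A :=
    MeasurableSet.iInter fun m => MeasurableSet.iUnion fun j =>
      MeasurableSet.iUnion fun _ => hAmeas (g j)
  have hofreal : ∀ j : ℕ, ENNReal.ofReal ((1/2:ℝ)^j) = (2⁻¹ : ℝ≥0∞)^j := by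
    intro j
    rw [ENNReal.ofReal_pow (by norm_num)]
    congr 1
    rw [show (1/2 : ℝ) = (2:ℝ)⁻¹ by norm_num]
    rw [ENNReal.ofReal_inv_of_pos (by norm_num)]
    congr 1
    norm_num
  have hνA : ν A = 0 := by
    have hm : ∀ m : ℕ, ν A ≤ (2⁻¹ : ℝ≥0∞)^m * 2 := by
      intro m
      have hsub2 : A ⊆ ⋃ j, Aset (g (j + m)) := by
        refine Set.iInter_subset_of_subset m (Set.iUnion_subset fun j =>
          Set.iUnion_subset fun hj => ?_)
        exact Set.subset_iUnion_of_subset (j - m) (by rw [Nat.sub_add_cancel hj])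
      calc ν A ≤ ν (⋃ j, Aset (g (j + m))) := measure_mono hsub2
        _ ≤ ∑' j : ℕ, ν (Aset (g (j + m))) := measure_iUnion_le _
        _ ≤ ∑' j : ℕ, (2⁻¹ : ℝ≥0∞)^(j + m) := by
            refine ENNReal.tsum_le_tsum fun j => ?_
            refine le_trans ((hbound (g (j+m))).1) ?_
            rw [← hofreal]
            exact ENNReal.ofReal_le_ofReal (hg (j+m))
        _ = (2⁻¹ : ℝ≥0∞)^m * ∑' j : ℕ, (2⁻¹ : ℝ≥0∞)^j := by
            rw [← ENNReal.tsum_mul_left]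
            exact tsum_congr fun j => by rw [pow_add]; ring
        _ = (2⁻¹ : ℝ≥0∞)^m * 2 := by
            rw [ENNReal.tsum_geometric, ENNReal.one_sub_inv_two, inv_inv]
    have htendsto : Tendsto (fun m : ℕ => (2⁻¹ : ℝ≥0∞)^m * 2) atTop (𝓝 0) := by
      have h1 : Tendsto (fun m : ℕ => (2⁻¹ : ℝ≥0∞)^m) atTop (𝓝 0) :=
        ENNReal.tendsto_pow_atTop_nhds_zero_of_lt_one
          (by rw [ENNReal.inv_lt_one]; exact ENNReal.one_lt_two)
      have h2 := ENNReal.Tendsto.mul_const h1 (Or.inr (ENNReal.ofNat_ne_top (n := 2)))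
      simpa using h2
    have := ge_of_tendsto' htendsto hm
    exact le_antisymm this (zero_le)
  have hμAc : μ (Aᶜ) = 0 := by
    have hAc : Aᶜ = ⋃ m, (⋃ j, ⋃ (_ : m ≤ j), Aset (g j))ᶜ := by
      rw [hAdef, Set.compl_iInter]
    rw [hAc]
    refine measure_iUnion_null fun m => ?_
    have hm2 : ∀ j : ℕ, m ≤ j → μ ((⋃ j, ⋃ (_ : m ≤ j), Aset (g j))ᶜ)
        ≤ (2⁻¹ : ℝ≥0∞)^j := by
      intro j hj
      have hsub3 : (⋃ j, ⋃ (_ : m ≤ j), Aset (g j))ᶜ ⊆ (Aset (g j))ᶜ := by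
        refine Set.compl_subset_compl.2 ?_
        exact Set.subset_iUnion_of_subset j (Set.subset_iUnion_of_subset hj
          subset_rfl)
      calc μ ((⋃ j, ⋃ (_ : m ≤ j), Aset (g j))ᶜ) ≤ μ ((Aset (g j))ᶜ) :=
            measure_mono hsub3
        _ ≤ ENNReal.ofReal (R (g j)) := (hbound (g j)).2
        _ ≤ (2⁻¹ : ℝ≥0∞)^j := by
            rw [← hofreal]
            exact ENNReal.ofReal_le_ofReal (hg j)
    have htendsto2 : Tendsto (fun j : ℕ => (2⁻¹ : ℝ≥0∞)^j) atTop (𝓝 0) :=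
      ENNReal.tendsto_pow_atTop_nhds_zero_of_lt_one
        (by rw [ENNReal.inv_lt_one]; exact ENNReal.one_lt_two)
    have hle := ge_of_tendsto htendsto2 (Filter.eventually_atTop.2 ⟨m, hm2⟩)
    exact le_antisymm hle (zero_le)
  -- contradiction
  have hμA : μ A = 0 := hac hνA
  have := measure_add_measure_compl (μ := μ) hAmeas'
  rw [hμA, hμAc, measure_univ] at this
  simp at this


lemma hellinger_term_eq {p : ℤ → ℕ → ℝ} (hp0 : ∀ k j, 0 ≤ p k j)
    (h1 : ∀ k, HasSum (p k) 1) (k : ℤ) :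
    ∑' j, (Real.sqrt (p (k+1) j) - Real.sqrt (p k j)) ^ 2
      = 2 - 2 * rho p (fun i => p (i+1)) k := by
  have hs1 : Summable (p k) := (h1 k).summable
  have hs2 : Summable (p (k+1)) := (h1 (k+1)).summable
  have hssqrt : Summable fun j => Real.sqrt (p k j * p (k+1) j) :=
    sqrt_summable hp0 (fun i j => hp0 (i+1) j) (fun i => (h1 i).summable)
      (fun i => (h1 (i+1)).summable) k
  have hpt : ∀ j, (Real.sqrt (p (k+1) j) - Real.sqrt (p k j)) ^ 2
      = p (k+1) j + p k j - 2 * Real.sqrt (p k j * p (k+1) j) := by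
    intro j
    have e1 := Real.sq_sqrt (hp0 (k+1) j)
    have e2 := Real.sq_sqrt (hp0 k j)
    have e3 : Real.sqrt (p k j * p (k+1) j) = Real.sqrt (p k j) * Real.sqrt (p (k+1) j) :=
      Real.sqrt_mul (hp0 k j) _
    rw [e3]
    nlinarith
  rw [tsum_congr hpt, Summable.tsum_sub (hs2.add hs1) (hssqrt.mul_left 2),
    Summable.tsum_add hs2 hs1, (h1 (k+1)).tsum_eq, (h1 k).tsum_eq, tsum_mul_left]
  rw [show rho p (fun i => p (i+1)) k = ∑' x : ℕ, Real.sqrt (p k x * p (k + 1) x) from rfl]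
  ring


/-- For a half-stationary product measure on `ℕ^ℤ` with everywhere positive
marginals (`P_k = p` for `k ≤ 0`), the shift is nonsingular iff
`∑_{k=1}^∞ ∑_{j ∈ ℕ} (√P_k(j) − √P_{k−1}(j))² < ∞`. -/
theorem nonsingular_iff_countable (P : Measure (ℤ → ℕ)) (p : ℤ → ℕ → ℝ)
    (hP : IsProductMeasure P p)
    (hpos : ∀ k j, 0 < p k j)
    (hhs : ∀ k : ℤ, k ≤ 0 → p k = p 0) :
    (P ≪ P.map (shift 1) ∧ P.map (shift 1) ≪ P) ↔
      Summable fun k : ℕ =>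
        ∑' j : ℕ, (Real.sqrt (p ((k : ℤ) + 1) j) - Real.sqrt (p (k : ℤ) j)) ^ 2 := by
  --

  obtain ⟨hprob, hp0, hp1, hcyl⟩ := hP
  haveI : IsProbabilityMeasure P := hprob
  haveI : IsProbabilityMeasure (P.map (shift 1)) :=
    Measure.isProbabilityMeasure_map (measurable_shift 1).aemeasurable
  have hPL : PL P p := PL_of_isProductMeasure ⟨hprob, hp0, hp1, hcyl⟩
  set q : ℤ → ℕ → ℝ := fun k => p (k + 1) with hqdef
  have hQL : PL (P.map (shift 1)) q := PL_map_shift hPL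
  have hq0 : ∀ i j, 0 ≤ q i j := fun i j => hp0 (i+1) j
  have hqpos : ∀ i j, 0 < q i j := fun i j => hpos (i+1) j
  have hq1 : ∀ i, HasSum (q i) 1 := fun i => hp1 (i+1)
  have hagree : ∀ i : ℤ, i < 0 → p i = q i := by
    intro i hi
    rw [hqdef]
    simp only
    rw [hhs i (by omega), hhs (i+1) (by omega)]
  have hiff : (Summable fun k : ℕ =>
      ∑' j : ℕ, (Real.sqrt (p ((k : ℤ) + 1) j) - Real.sqrt (p (k : ℤ) j)) ^ 2)
      ↔ Summable fun k : ℕ => 1 - rho p q (k : ℤ) := by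
    have hfun : (fun k : ℕ =>
        ∑' j : ℕ, (Real.sqrt (p ((k : ℤ) + 1) j) - Real.sqrt (p (k : ℤ) j)) ^ 2)
        = fun k : ℕ => 2 * (1 - rho p q (k : ℤ)) := by
      funext k
      rw [hellinger_term_eq hp0 hp1 (k : ℤ)]
      ring
    rw [hfun]
    exact summable_mul_left_iff (by norm_num : (2:ℝ) ≠ 0)
  constructor
  · rintro ⟨hac1, hac2⟩
    by_contra hns
    exact not_ac_of_not_summable hPL hQL hp0 hq0 hp1 hq1
      (fun h => hns (hiff.2 h)) hac1
  · intro hsummable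
    have hsum1 : Summable fun k : ℕ => 1 - rho p q (k : ℤ) := hiff.1 hsummable
    have hsum2 : Summable fun k : ℕ => 1 - rho q p (k : ℤ) :=
      hsum1.congr fun k => by rw [rho_comm]
    exact ⟨ac_one_sided hPL hQL hpos hqpos hp1 hq1 hagree hsum1,
      ac_one_sided hQL hPL hqpos hpos hq1 hp1 (fun i hi => (hagree i hi).symm) hsum2⟩


end CountableAlphabet
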